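/- Let n ≥ 2 be an integer and let c, s > 0 be real numbers; set α = s/(2c). For λ ∈ ℝ^{n-1} define p_L(λ) = A · ∏_{1≤i<j≤n-1}|λ_j − λ_i| · exp( −(1/(4c)) [ ∑_{i=1}^{n-1} λ_i² − (∑_{i=1}^{n-1} λ_i)²/(n+1) ] ), where A = 2^{(2−7(n−1)−(n−1)²)/4} / ( √(n+1) · c^{n(n−1)/4} · ∏_{i=1}^{n-1} Γ(1 + i/2) ); and for u > 0 define p_N(u) = 2 u^{n−1} exp(−u²/(2s)) / ( (2s)^{n/2} Γ(n/2) ). Then for every κ ∈ ℝ^{n-1}: ∫_0^∞ u^{n−1} p_L(uκ) p_N(u) du = [ 2^{(n²−7n+8)/4} Γ(n(n+1)/4) / ( √(n+1) Γ(n/2) ∏_{i=1}^{n-1} Γ(1 + i/2) ) ] · α^{n(n−1)/4} · ∏_{1≤i<j≤n-1}|κ_j − κ_i| / ( α [ ∑_{i=1}^{n-1} κ_i² − (∑_{i=1}^{n-1} κ_i)²/(n+1) ] + 1 )^{(n²+n)/4}. -/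

import Mathlib

open scoped Real

/-- The density of the principal curvatures: integrating the joint eigenvalue
density `p_L` (of the `(n−1)`-dimensional Hessian) against the χ-type density
`p_N` of the gradient norm yields the closed form of the paper's main theorem. -/
theorem curvature_density_integral (n : ℕ) (hn : 2 ≤ n) (c s : ℝ)
    (hc : 0 < c) (hs : 0 < s) (κ : Fin (n - 1) → ℝ) :
    let A : ℝ :=
      (2 : ℝ) ^ ((2 - 7 * ((n : ℝ) - 1) - ((n : ℝ) - 1) ^ 2) / 4) /
        (Real.sqrt ((n : ℝ) + 1) * c ^ ((n : ℝ) * ((n : ℝ) - 1) / 4) *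
          ∏ i ∈ Finset.Icc 1 (n - 1), Real.Gamma (1 + (i : ℝ) / 2))
    let pL : (Fin (n - 1) → ℝ) → ℝ := fun lam =>
      A * (∏ i : Fin (n - 1), ∏ j ∈ Finset.Ioi i, |lam j - lam i|) *
        Real.exp (-(1 / (4 * c)) *
          (∑ i, lam i ^ 2 - (∑ i, lam i) ^ 2 / ((n : ℝ) + 1)))
    let pN : ℝ → ℝ := fun u =>
      2 * u ^ (n - 1) * Real.exp (-u ^ 2 / (2 * s)) /
        ((2 * s) ^ ((n : ℝ) / 2) * Real.Gamma ((n : ℝ) / 2))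
    let α : ℝ := s / (2 * c)
    (∫ u in Set.Ioi (0 : ℝ), u ^ (n - 1) * pL (fun i => u * κ i) * pN u) =
      (2 : ℝ) ^ (((n : ℝ) ^ 2 - 7 * n + 8) / 4) *
          Real.Gamma ((n : ℝ) * ((n : ℝ) + 1) / 4) /
          (Real.sqrt ((n : ℝ) + 1) * Real.Gamma ((n : ℝ) / 2) *
            ∏ i ∈ Finset.Icc 1 (n - 1), Real.Gamma (1 + (i : ℝ) / 2)) *
        α ^ ((n : ℝ) * ((n : ℝ) - 1) / 4) *
        (∏ i : Fin (n - 1), ∏ j ∈ Finset.Ioi i, |κ j - κ i|) /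
        (α * (∑ i, κ i ^ 2 - (∑ i, κ i) ^ 2 / ((n : ℝ) + 1)) + 1) ^
          (((n : ℝ) ^ 2 + n) / 4) := by
  intro A pL pN α
  have hα : α = s / (2 * c) := rfl
  have hα0 : 0 < α := by rw [hα]; positivity
  have hn1 : (1:ℝ) ≤ (n:ℝ) := by exact_mod_cast Nat.one_le_of_lt hn
  -- notation
  set P : ℝ := ∏ i : Fin (n - 1), ∏ j ∈ Finset.Ioi i, |κ j - κ i| with hP
  set Q : ℝ := ∑ i, κ i ^ 2 - (∑ i, κ i) ^ 2 / ((n : ℝ) + 1) with hQdef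
  have hQ : 0 ≤ Q := by
    rw [hQdef]
    have h1 : (∑ i, κ i) ^ 2 ≤ ((n:ℝ) + 1) * ∑ i, κ i ^ 2 := by
      have h0 : (∑ i, κ i) ^ 2 ≤ ((Finset.univ : Finset (Fin (n-1))).card : ℝ) * ∑ i, κ i ^ 2 :=
        sq_sum_le_card_mul_sum_sq
      have hcard : ((Finset.univ : Finset (Fin (n-1))).card : ℝ) ≤ (n:ℝ) + 1 := by
        simp only [Finset.card_univ, Fintype.card_fin]
        have h2 : ((n-1 : ℕ) : ℝ) ≤ ((n+1 : ℕ) : ℝ) := by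
          exact_mod_cast (by omega : n - 1 ≤ n + 1)
        push_cast at h2
        exact h2
      have hsq : (0:ℝ) ≤ ∑ i, κ i ^ 2 := by positivity
      calc (∑ i, κ i) ^ 2 ≤ _ := h0
        _ ≤ ((n:ℝ) + 1) * ∑ i, κ i ^ 2 := mul_le_mul_of_nonneg_right hcard hsq
    have hn1' : (0:ℝ) < (n:ℝ) + 1 := by positivity
    rw [sub_nonneg, div_le_iff₀ hn1']
    linarith
  set T : ℝ := α * Q + 1 with hTdef
  have hT : 0 < T := by rw [hTdef]; positivity
  set b : ℝ := T / (2 * s) with hbdef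
  have hb : 0 < b := by rw [hbdef]; positivity
  set v : ℕ := ∑ i : Fin (n-1), (Finset.Ioi i).card with hvdef
  set M : ℕ := (n - 1) + v + (n - 1) with hMdef
  -- cast value of v
  have hv2 : ((v : ℕ) : ℝ) * 2 = ((n:ℝ)-1)*((n:ℝ)-2) := by
    have h1 : v = ∑ i ∈ Finset.range (n-1), (n-1-1-i) := by
      rw [hvdef]
      simp_rw [Fin.card_Ioi]
      exact Fin.sum_univ_eq_sum_range (fun i => n-1-1-i) (n-1)
    have h4 : v * 2 = (n-1) * (n-1-1) := by
      rw [h1, Finset.sum_range_reflect (fun j => j) (n-1), Finset.sum_range_id_mul_two (n-1)]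
    have h5 : ((v:ℕ) : ℝ) * 2 = (((n-1)*(n-1-1) : ℕ) : ℝ) := by
      exact_mod_cast congrArg (Nat.cast : ℕ → ℝ) h4
    rw [h5, Nat.cast_mul, Nat.cast_sub (by omega : 1 ≤ n), Nat.cast_sub (by omega : 1 ≤ n-1),
      Nat.cast_sub (by omega : 1 ≤ n), Nat.cast_one]
    ring
  have hMcast : ((M : ℕ) : ℝ) = 2*((n:ℝ)-1) + ((n:ℝ)-1)*((n:ℝ)-2)/2 := by
    rw [hMdef]
    push_cast [Nat.cast_sub (by omega : 1 ≤ n)]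
    linarith
  have hM1 : (((M:ℕ):ℝ) + 1) / 2 = ((n:ℝ)^2 + n) / 4 := by
    rw [hMcast]; ring
  -- the integral identity
  have hI : (∫ u in Set.Ioi (0 : ℝ), u ^ (n - 1) * pL (fun i => u * κ i) * pN u) =
      (A * P * 2 / ((2 * s) ^ ((n : ℝ) / 2) * Real.Gamma ((n : ℝ) / 2))) *
        ∫ u in Set.Ioi (0:ℝ), u ^ ((M:ℕ):ℝ) * Real.exp (-b * u ^ (2:ℝ)) := by
    rw [← MeasureTheory.integral_const_mul]
    refine MeasureTheory.setIntegral_congr_fun measurableSet_Ioi (fun u hu => ?_)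
    have hu : 0 < u := hu
    simp only [pL, pN]
    have hV : (∏ i : Fin (n-1), ∏ j ∈ Finset.Ioi i, |u * κ j - u * κ i|) = u ^ v * P := by
      rw [hP, hvdef, ← Finset.prod_pow_eq_pow_sum, ← Finset.prod_mul_distrib]
      refine Finset.prod_congr rfl fun i _ => ?_
      rw [← Finset.prod_const, ← Finset.prod_mul_distrib]
      refine Finset.prod_congr rfl fun j _ => ?_
      rw [← mul_sub, abs_mul, abs_of_pos hu]
    have hexp : Real.exp (-(1 / (4 * c)) *
          (∑ i, (u * κ i) ^ 2 - (∑ i, u * κ i) ^ 2 / ((n : ℝ) + 1))) *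
        Real.exp (-u ^ 2 / (2 * s)) = Real.exp (-b * u ^ 2) := by
      rw [← Real.exp_add]
      congr 1
      simp_rw [mul_pow, ← Finset.mul_sum]
      rw [hbdef, hTdef, hQdef, hα]
      field_simp
      ring
    rw [Real.rpow_natCast u M, show ((2:ℝ)) = ((2:ℕ):ℝ) from by norm_num,
      Real.rpow_natCast u 2, hV, ← hexp, hMdef, pow_add, pow_add]
    generalize (∏ i ∈ Finset.Icc 1 (n - 1), Real.Gamma (1 + (i : ℝ) / 2)) = G
    generalize Real.exp (-(1 / (4 * c)) *
      (∑ i, (u * κ i) ^ 2 - (∑ i, u * κ i) ^ 2 / ((n : ℝ) + 1))) = E1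
    generalize Real.exp (-u ^ 2 / (2 * s)) = E2
    ring
  rw [hI, integral_rpow_mul_exp_neg_mul_rpow (by norm_num : (0:ℝ) < 2)
    (by have := Nat.cast_nonneg (α := ℝ) M; linarith : (-1:ℝ) < ((M:ℕ):ℝ)) hb]
  -- now pure algebra
  have hMe : (-(((M:ℕ):ℝ) + 1) / 2) = -((((n:ℝ)^2 + n)) / 4) := by
    rw [neg_div, hM1]
  have h2s0 : (0:ℝ) < 2 * s := by positivity
  have hbe : b ^ (-(((M:ℕ):ℝ) + 1) / 2) =
      (2*s) ^ ((n:ℝ)/2) * (c ^ ((n:ℝ)*((n:ℝ)-1)/4) *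
        ((2:ℝ) ^ (2*((n:ℝ)*((n:ℝ)-1)/4)) * α ^ ((n:ℝ)*((n:ℝ)-1)/4))) /
        T ^ (((n:ℝ)^2 + n)/4) := by
    have hcs : 2*s = c*(4*α) := by rw [hα]; field_simp; ring
    have h4 : (4:ℝ) = (2:ℝ) ^ (2:ℝ) := by
      rw [show (2:ℝ) = ((2:ℕ):ℝ) from by norm_num, Real.rpow_natCast]; norm_num
    have h2se : (2*s) ^ (((n:ℝ)^2 + n)/4) =
        (2*s) ^ ((n:ℝ)/2) * (2*s) ^ ((n:ℝ)*((n:ℝ)-1)/4) := by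
      rw [← Real.rpow_add h2s0]; congr 1; ring
    have h2sf : (2*s) ^ ((n:ℝ)*((n:ℝ)-1)/4) =
        c ^ ((n:ℝ)*((n:ℝ)-1)/4) *
          ((2:ℝ) ^ (2*((n:ℝ)*((n:ℝ)-1)/4)) * α ^ ((n:ℝ)*((n:ℝ)-1)/4)) := by
      rw [hcs, Real.mul_rpow hc.le (by positivity), Real.mul_rpow (by norm_num) hα0.le, h4,
        ← Real.rpow_mul (by norm_num : (0:ℝ) ≤ 2)]
    rw [hMe, Real.rpow_neg hb.le, hbdef,
      Real.div_rpow hT.le h2s0.le, inv_div, h2se, h2sf]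
  have hΓM : Real.Gamma ((((M:ℕ):ℝ) + 1) / 2) = Real.Gamma ((n:ℝ) * ((n:ℝ) + 1) / 4) := by
    rw [show (((M:ℕ):ℝ) + 1) / 2 = (n:ℝ) * ((n:ℝ) + 1) / 4 from by rw [hM1]; ring]
  have hpow : (2:ℝ) ^ ((2 - 7 * ((n : ℝ) - 1) - ((n : ℝ) - 1) ^ 2) / 4) *
      (2:ℝ) ^ (2*((n:ℝ)*((n:ℝ)-1)/4)) = (2:ℝ) ^ (((n : ℝ) ^ 2 - 7 * n + 8) / 4) := by
    rw [← Real.rpow_add (by norm_num : (0:ℝ) < 2)]; congr 1; ring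
  rw [hbe, hΓM, ← hpow]
  simp only [A]
  have hG0 : (0:ℝ) < ∏ i ∈ Finset.Icc 1 (n - 1), Real.Gamma (1 + (i : ℝ) / 2) :=
    Finset.prod_pos fun i _ => Real.Gamma_pos_of_pos (by positivity)
  have hsq0 : (0:ℝ) < Real.sqrt ((n:ℝ) + 1) := Real.sqrt_pos.mpr (by positivity)
  have hΓn0 : (0:ℝ) < Real.Gamma ((n:ℝ)/2) := Real.Gamma_pos_of_pos (by positivity)
  have hcf0 : (0:ℝ) < c ^ ((n:ℝ)*((n:ℝ)-1)/4) := Real.rpow_pos_of_pos hc _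
  have h2sn0 : (0:ℝ) < (2*s) ^ ((n:ℝ)/2) := Real.rpow_pos_of_pos h2s0 _
  have hT0 : (0:ℝ) < T ^ (((n:ℝ)^2 + n)/4) := Real.rpow_pos_of_pos hT _
  field_simp
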